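/- arXiv:2412.21062 — 2 statements merged into one kernel-verified Lean document; each statement's English description precedes it below -/
import Mathlib

section
/- Let real sequences $\{a^{(k)}\}$, $\{b^{(k)}\}$, $\{c^{(k)}\}$ indexed by tuples $(j_1,\ldots,j_k)\in\{1,2,3\}^k$ satisfy the recursion $a^{(k)}_{j_1,\ldots,j_k} = c^{(k)}_{j_1,\ldots,j_k} - \sum_{i=1}^{k-1} a^{(k-i)}_{j_1,\ldots,j_{k-i}} b^{(i)}_{j_{k-i+1},\ldots,j_k} - b^{(k)}_{j_1,\ldots,j_k}$, where the order-$k$ 1-norms of $b$ and $c$ obey $\sum_{\vec{j}}|c^{(k)}_{\vec{j}}| \le \frac{2^k}{k!}$, $\sum_{\vec{j}}|b^{(k)}_{\vec{j}}| \le \frac{2k}{(k!)^2}$, and $\max_{\vec{j}}|b^{(k)}_{\vec{j}}| \le \frac{1}{(k!)^2}$. If $a_1 = 0$, $a_2 = \sum_{\vec j}|a^{(2)}_{\vec j}| > 0$, then there exists a constant $\lambda > 2.5$ (independent of $k$) such that $a_k \coloneqq \sum_{\vec{j}}|a^{(k)}_{\vec{j}}| \le \lambda^{k-2} a_2$ for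 all $k \ge 3$. -/
/-- The order-`k` 1-norm of a tuple-indexed coefficient family `f`, indexed by
tuples `(j₁,…,j_k) ∈ {1,2,3}^k` (encoded as lists over `Fin 3` of length `k`):
`∑_{j⃗} |f^{(k)}_{j⃗}|`. -/
noncomputable def tupleNorm1 (f : List (Fin 3) → ℝ) (k : ℕ) : ℝ :=
  ∑ v : Fin k → Fin 3, |f (List.ofFn v)|

namespace DissipAux

lemma tupleNorm1_nonneg (f : List (Fin 3) → ℝ) (k : ℕ) : 0 ≤ tupleNorm1 f k :=
  Finset.sum_nonneg fun _ _ => abs_nonneg _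

lemma split_sum (a b : List (Fin 3) → ℝ) (m n k : ℕ) (h : m + n = k) :
    ∑ v : Fin k → Fin 3, |a ((List.ofFn v).take m)| * |b ((List.ofFn v).drop m)|
      = tupleNorm1 a m * tupleNorm1 b n := by
  subst h
  rw [tupleNorm1, tupleNorm1, Finset.sum_mul_sum]
  let e : ((Fin m → Fin 3) × (Fin n → Fin 3)) ≃ (Fin (m + n) → Fin 3) :=
    (Equiv.sumArrowEquivProdArrow (Fin m) (Fin n) (Fin 3)).symm.trans
      (Equiv.arrowCongr finSumFinEquiv (Equiv.refl _))
  rw [← Equiv.sum_comp e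
    (fun v => |a ((List.ofFn v).take m)| * |b ((List.ofFn v).drop m)|)]
  rw [Fintype.sum_prod_type]
  refine Finset.sum_congr rfl fun p _ => Finset.sum_congr rfl fun q _ => ?_
  have h1 : List.ofFn (e (p, q)) = List.ofFn p ++ List.ofFn q := by
    rw [List.ofFn_add]
    congr 1
    · refine congrArg _ (funext fun i => ?_)
      simp [e, Equiv.sumArrowEquivProdArrow, Equiv.arrowCongr]
      exact congrArg (Sum.elim p q) (finSumFinEquiv_symm_apply_castAdd i)
    · refine congrArg _ (funext fun i => ?_)
      simp [e, Equiv.sumArrowEquivProdArrow, Equiv.arrowCongr]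
  rw [h1, List.take_left' (by simp), List.drop_left' (by simp)]

lemma rec_bound (a b c : List (Fin 3) → ℝ)
    (hrec : ∀ l : List (Fin 3), 1 ≤ l.length →
      a l = c l -
        (∑ i ∈ Finset.Ico 1 l.length, a (l.take (l.length - i)) * b (l.drop (l.length - i))) -
        b l) (k : ℕ) (hk : 1 ≤ k) :
    tupleNorm1 a k ≤ tupleNorm1 c k +
      (∑ i ∈ Finset.Ico 1 k, tupleNorm1 a (k - i) * tupleNorm1 b i) + tupleNorm1 b k := by
  have step : tupleNorm1 a k ≤
      ∑ v : Fin k → Fin 3, (|c (List.ofFn v)| +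
        (∑ i ∈ Finset.Ico 1 k,
          |a ((List.ofFn v).take (k - i))| * |b ((List.ofFn v).drop (k - i))|) +
        |b (List.ofFn v)|) := by
    refine Finset.sum_le_sum fun v _ => ?_
    have hl : (List.ofFn v).length = k := List.length_ofFn
    have := hrec (List.ofFn v) (by rw [hl]; exact hk)
    rw [hl] at this
    rw [this]
    calc |c (List.ofFn v) - (∑ i ∈ Finset.Ico 1 k,
          a ((List.ofFn v).take (k - i)) * b ((List.ofFn v).drop (k - i))) - b (List.ofFn v)|
        ≤ |c (List.ofFn v) - (∑ i ∈ Finset.Ico 1 k,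
          a ((List.ofFn v).take (k - i)) * b ((List.ofFn v).drop (k - i)))| + |b (List.ofFn v)| :=
          abs_sub _ _
      _ ≤ |c (List.ofFn v)| + |∑ i ∈ Finset.Ico 1 k,
          a ((List.ofFn v).take (k - i)) * b ((List.ofFn v).drop (k - i))| + |b (List.ofFn v)| := by
          gcongr; exact abs_sub _ _
      _ ≤ _ := by
          gcongr
          calc |∑ i ∈ Finset.Ico 1 k,
              a ((List.ofFn v).take (k - i)) * b ((List.ofFn v).drop (k - i))|
              ≤ ∑ i ∈ Finset.Ico 1 k,
                |a ((List.ofFn v).take (k - i)) * b ((List.ofFn v).drop (k - i))| :=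
                Finset.abs_sum_le_sum_abs _ _
            _ = _ := by simp [abs_mul]
  refine step.trans ?_
  rw [Finset.sum_add_distrib, Finset.sum_add_distrib, Finset.sum_comm]
  refine le_of_eq ?_
  congr 1
  congr 1
  refine Finset.sum_congr rfl fun i hi => ?_
  have hik : i < k := (Finset.mem_Ico.mp hi).2
  exact split_sum a b (k - i) i k (Nat.sub_add_cancel hik.le)

lemma nat1 (k : ℕ) : 2 ^ k ≤ 2 * k.factorial := by
  induction k with
  | zero => norm_num
  | succ n ih =>
    rcases Nat.eq_zero_or_pos n with h | h
    · subst h; norm_num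
    · calc 2 ^ (n + 1) = 2 * 2 ^ n := by ring
        _ ≤ 2 * (2 * n.factorial) := by omega
        _ ≤ 2 * ((n + 1) * n.factorial) := by
            have : 2 ≤ n + 1 := by omega
            nlinarith [Nat.factorial_pos n]
        _ = 2 * (n + 1).factorial := by rw [Nat.factorial_succ]

lemma nat2 (i : ℕ) : i * 2 ^ i ≤ 2 * i.factorial ^ 2 := by
  induction i with
  | zero => norm_num
  | succ n ih =>
    rcases Nat.eq_zero_or_pos n with h | h
    · subst h; norm_num
    · have h4 : 4 ≤ (n + 1) ^ 2 := by nlinarith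
      calc (n + 1) * 2 ^ (n + 1) = 2 ^ n * (2 * n + 2) := by ring
        _ ≤ 2 ^ n * (4 * n) := by
            have : 2 * n + 2 ≤ 4 * n := by omega
            exact Nat.mul_le_mul_left _ this
        _ = 4 * (n * 2 ^ n) := by ring
        _ ≤ 4 * (2 * n.factorial ^ 2) := Nat.mul_le_mul_left _ ih
        _ ≤ (n + 1) ^ 2 * (2 * n.factorial ^ 2) := Nat.mul_le_mul_right _ h4
        _ = 2 * (n + 1).factorial ^ 2 := by rw [Nat.factorial_succ]; ring

lemma nat3 (k : ℕ) : k ≤ k.factorial ^ 2 :=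
  le_trans (Nat.self_le_factorial k) (Nat.le_self_pow two_ne_zero _)

lemma geo (k : ℕ) : ∑ i ∈ Finset.Ico 1 k, ((1:ℝ)/8) ^ i ≤ 1/7 := by
  rcases Nat.eq_zero_or_pos k with h | h
  · subst h; simp
  · rw [Finset.sum_Ico_eq_sub _ h, geom_sum_eq (by norm_num : (1/8:ℝ) ≠ 1),
      geom_sum_eq (by norm_num : (1/8:ℝ) ≠ 1)]
    have h1 : (0:ℝ) ≤ (1/8) ^ k := by positivity
    have h2 : ((1:ℝ)/8) ^ 1 = 1/8 := pow_one _
    have e : ∀ t : ℝ, (t - 1) / ((1:ℝ)/8 - 1) = (1 - t) * (8/7) := fun t => by ring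
    rw [h2, e, e]
    nlinarith

-- real-valued bounds
lemma c_small (c : List (Fin 3) → ℝ)
    (hc : ∀ k : ℕ, tupleNorm1 c k ≤ 2 ^ k / (Nat.factorial k)) (k : ℕ) :
    tupleNorm1 c k ≤ 2 := by
  refine (hc k).trans ?_
  rw [div_le_iff₀ (by positivity)]
  have := nat1 k
  have : (2:ℝ) ^ k ≤ 2 * (k.factorial : ℝ) := by exact_mod_cast this
  linarith

lemma b_small (b : List (Fin 3) → ℝ)
    (hb : ∀ k : ℕ, tupleNorm1 b k ≤ 2 * k / ((Nat.factorial k) ^ 2)) (k : ℕ) :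
    tupleNorm1 b k ≤ 2 := by
  refine (hb k).trans ?_
  rw [div_le_iff₀ (by positivity)]
  have := nat3 k
  have : (k:ℝ) ≤ (k.factorial : ℝ) ^ 2 := by exact_mod_cast this
  linarith

lemma b_geo (b : List (Fin 3) → ℝ)
    (hb : ∀ k : ℕ, tupleNorm1 b k ≤ 2 * k / ((Nat.factorial k) ^ 2)) (i : ℕ) :
    tupleNorm1 b i ≤ 4 / 2 ^ i := by
  refine (hb i).trans ?_
  rw [div_le_div_iff₀ (by positivity) (by positivity)]
  have := nat2 i
  have h : (i:ℝ) * 2 ^ i ≤ 2 * (i.factorial : ℝ) ^ 2 := by exact_mod_cast this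
  nlinarith

lemma a_le_four_pow (a b c : List (Fin 3) → ℝ)
    (hrec : ∀ l : List (Fin 3), 1 ≤ l.length →
      a l = c l -
        (∑ i ∈ Finset.Ico 1 l.length, a (l.take (l.length - i)) * b (l.drop (l.length - i))) -
        b l)
    (hc : ∀ k : ℕ, tupleNorm1 c k ≤ 2 ^ k / (Nat.factorial k))
    (hb : ∀ k : ℕ, tupleNorm1 b k ≤ 2 * k / ((Nat.factorial k) ^ 2))
    (ha1 : tupleNorm1 a 1 = 0) :
    ∀ k : ℕ, 1 ≤ k → tupleNorm1 a k ≤ 4 ^ k := by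
  intro k
  induction k using Nat.strong_induction_on with
  | _ k ih =>
    intro hk
    rcases eq_or_lt_of_le hk with h1 | h2
    · rw [← h1, ha1]; norm_num
    · -- k ≥ 2
      have hmid : (∑ i ∈ Finset.Ico 1 k, tupleNorm1 a (k - i) * tupleNorm1 b i)
          ≤ (4:ℝ) ^ k * (4/7) := by
        calc (∑ i ∈ Finset.Ico 1 k, tupleNorm1 a (k - i) * tupleNorm1 b i)
            ≤ ∑ i ∈ Finset.Ico 1 k, (4:ℝ) ^ k * 4 * (1/8) ^ i := by
              refine Finset.sum_le_sum fun i hi => ?_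
              obtain ⟨hi1, hi2⟩ := Finset.mem_Ico.mp hi
              have hki : 1 ≤ k - i := by omega
              have hkik : k - i < k := by omega
              have ha : tupleNorm1 a (k - i) ≤ 4 ^ (k - i) := ih _ hkik hki
              have hbb : tupleNorm1 b i ≤ 4 / 2 ^ i := b_geo b hb i
              have hki' : (4:ℝ) ^ (k - i) * 4 ^ i = 4 ^ k := by
                rw [← pow_add]; congr 1; omega
              have h48 : (4:ℝ) ^ (k - i) * (4 / 2 ^ i) = 4 ^ k * 4 * (1/8) ^ i := by
                have h8 : (8:ℝ) ^ i = 4 ^ i * 2 ^ i := by rw [← mul_pow]; norm_num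
                rw [div_pow, one_pow]
                field_simp
                rw [h8]
                linear_combination ((2:ℝ) ^ i) * hki'
              calc tupleNorm1 a (k - i) * tupleNorm1 b i
                  ≤ 4 ^ (k - i) * (4 / 2 ^ i) := by
                    apply mul_le_mul ha hbb (tupleNorm1_nonneg b i) (by positivity)
                _ = 4 ^ k * 4 * (1/8) ^ i := h48
          _ = (4:ℝ) ^ k * 4 * ∑ i ∈ Finset.Ico 1 k, ((1:ℝ)/8) ^ i := by
              rw [Finset.mul_sum]
          _ ≤ (4:ℝ) ^ k * 4 * (1/7) := by
              have := geo k
              have h4 : (0:ℝ) ≤ 4 ^ k * 4 := by positivity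
              exact mul_le_mul_of_nonneg_left this h4
          _ = (4:ℝ) ^ k * (4/7) := by ring
      have hmain := rec_bound a b c hrec k hk
      have hck := c_small c hc k
      have hbk := b_small b hb k
      have hk4 : (16:ℝ) ≤ 4 ^ k := by
        calc (16:ℝ) = 4 ^ 2 := by norm_num
          _ ≤ 4 ^ k := by
              apply pow_le_pow_right₀ (by norm_num) h2
      linarith

end DissipAux

/-- Geometric growth bound for the dissipative-compensation coefficients (Lemma 2):
if `a^{(k)}_{j⃗} = c^{(k)}_{j⃗} - ∑_{i=1}^{k-1} a^{(k-i)}_{j₁…j_{k-i}} b^{(i)}_{j_{k-i+1}…j_k}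
- b^{(k)}_{j⃗}` with `∑|c^{(k)}| ≤ 2^k/k!`, `∑|b^{(k)}| ≤ 2k/(k!)²`, `max|b^{(k)}| ≤ 1/(k!)²`,
`a₁ = 0`, and `a₂ > 0`, then there is a constant `λ > 2.5` (independent of `k`) with
`a_k ≤ λ^{k-2} a₂` for all `k ≥ 3`. -/
theorem dissipative_coefficients_geometric_growth
    (a b c : List (Fin 3) → ℝ)
    (hrec : ∀ l : List (Fin 3), 1 ≤ l.length →
      a l = c l -
        (∑ i ∈ Finset.Ico 1 l.length, a (l.take (l.length - i)) * b (l.drop (l.length - i))) -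
        b l)
    (hc : ∀ k : ℕ, tupleNorm1 c k ≤ 2 ^ k / (Nat.factorial k))
    (hb : ∀ k : ℕ, tupleNorm1 b k ≤ 2 * k / ((Nat.factorial k) ^ 2))
    (hbmax : ∀ l : List (Fin 3), |b l| ≤ 1 / ((Nat.factorial l.length) ^ 2))
    (ha1 : tupleNorm1 a 1 = 0) (ha2 : 0 < tupleNorm1 a 2) :
    ∃ lam : ℝ, 2.5 < lam ∧ ∀ k : ℕ, 3 ≤ k →
      tupleNorm1 a k ≤ lam ^ (k - 2) * tupleNorm1 a 2 := by
  set A := tupleNorm1 a 2 with hA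
  refine ⟨max 4 (64 / A), lt_of_lt_of_le (by norm_num) (le_max_left _ _), fun k hk => ?_⟩
  have h4 : (4:ℝ) ≤ max 4 (64 / A) := le_max_left _ _
  have h64 : 64 / A ≤ max 4 (64 / A) := le_max_right _ _
  have hak : tupleNorm1 a k ≤ 4 ^ k :=
    DissipAux.a_le_four_pow a b c hrec hc hb ha1 k (by omega)
  refine hak.trans ?_
  have hkk : k - 2 = (k - 3) + 1 := by omega
  rw [hkk, pow_succ]
  have hpow : (4:ℝ) ^ (k - 3) ≤ (max 4 (64 / A)) ^ (k - 3) := by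
    apply pow_le_pow_left₀ (by norm_num) h4
  have h43 : (4:ℝ) ^ (k - 3) * 64 = 4 ^ k := by
    have e : (4:ℝ) ^ (k - 3) * 4 ^ 3 = 4 ^ ((k - 3) + 3) := (pow_add 4 _ _).symm
    have e2 : (k - 3) + 3 = k := by omega
    rw [e2] at e; norm_num at e; linarith
  calc (4:ℝ) ^ k = 4 ^ (k - 3) * (64 / A) * A := by
        field_simp
        exact h43.symm
    _ ≤ (max 4 (64 / A)) ^ (k - 3) * (max 4 (64 / A)) * A := by
        apply mul_le_mul_of_nonneg_right _ ha2.le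
        apply mul_le_mul hpow h64 (by positivity) (by positivity)
    _ = _ := rfl
end

section
/- Let $\mathcal{L}(t)$ be a continuously differentiable superoperator-valued function on $[t_0,t_0+\tau]$ with $\max_t\|\mathcal{L}(t)\|_\diamond\le L$ and $\max_t\|\dot{\mathcal{L}}(t)\|_\diamond\le L'$. Let $\mathcal{L}_M(t)$ be the piecewise-constant approximation taking value $\mathcal{L}$ at the midpoint of each of $M$ equal slices, so that $\|\mathcal{L}_M(t)-\mathcal{L}(t)\|_\diamond \le \frac{\tau L'}{2M}$ for all $t$. Then the time-ordered evolutions satisfy $\left\|\mathcal{T}e^{\int_{t_0}^{t_0+\tau}\mathcal{L}_M(t)dt}-\mathcal{T}e^{\int_{t_0}^{t_0+\tau}\mathcal{L}(t)dt}\right\|_\diamond \le \frac{\tau^2 L'}{2M}e^{L\tau}$. -/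
/-- The midpoint of the slice containing `t` lies in `[t₀, t₀+τ]` and is within
`τ/(2M)` of `t`, for `t ∈ [t₀, t₀+τ)`. -/
lemma midpoint_slice_aux {t₀ τ t : ℝ} {M : ℕ} (hτ : 0 < τ) (hM : 0 < M)
    (ht : t ∈ Set.Ico t₀ (t₀ + τ)) :
    (t₀ + ((⌊(t - t₀) * M / τ⌋₊ : ℝ) + 1 / 2) * (τ / M)) ∈ Set.Icc t₀ (t₀ + τ) ∧
    |t₀ + ((⌊(t - t₀) * M / τ⌋₊ : ℝ) + 1 / 2) * (τ / M) - t| ≤ τ / (2 * M) := by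
  have hMR : (0:ℝ) < M := by exact_mod_cast hM
  set u : ℝ := (t - t₀) * M / τ with hu
  have hu0 : 0 ≤ u := div_nonneg (mul_nonneg (by linarith [ht.1]) hMR.le) hτ.le
  have huM : u < M := by
    rw [hu, div_lt_iff₀ hτ]
    nlinarith [ht.2]
  set k : ℕ := ⌊u⌋₊ with hk
  have hk1 : (k:ℝ) ≤ u := Nat.floor_le hu0
  have hk2 : u < (k:ℝ) + 1 := Nat.lt_floor_add_one u
  have hkM : (k:ℝ) ≤ (M:ℝ) - 1 := by
    have h1 : k < M := (Nat.floor_lt hu0).2 (by exact_mod_cast huM)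
    have h2 : (k:ℝ) + 1 ≤ M := by exact_mod_cast Nat.succ_le_of_lt h1
    linarith
  have hh : (0:ℝ) < τ / M := div_pos hτ hMR
  have hMh : (M:ℝ) * (τ / M) = τ := by field_simp
  have ht' : t - t₀ = u * (τ / M) := by
    rw [hu]; field_simp
  refine ⟨⟨by nlinarith, by nlinarith⟩, ?_⟩
  have habs : t₀ + ((k:ℝ) + 1 / 2) * (τ / M) - t = ((k:ℝ) + 1 / 2 - u) * (τ / M) := by
    nlinarith [ht']
  have heq : τ / (2 * M) = (1 / 2) * (τ / M) := by
    field_simp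
  have hub : (k:ℝ) + 1 / 2 - u ≤ 1 / 2 := by linarith
  have hlb : -(1 / 2 : ℝ) ≤ (k:ℝ) + 1 / 2 - u := by linarith
  rw [habs, abs_le]
  constructor
  · have := mul_le_mul_of_nonneg_right hlb hh.le
    rw [heq]; linarith
  · have := mul_le_mul_of_nonneg_right hub hh.le
    rw [heq]; linarith

set_option maxHeartbeats 2000000 in
/-- Discretization error for time-dependent Lindbladian evolution: let `𝓛(t)` be a
continuously differentiable superoperator-valued function on `[t₀, t₀+τ]` with
`‖𝓛(t)‖_♦ ≤ L` and `‖𝓛'(t)‖_♦ ≤ L'`, and let `𝓛_M` be its piecewise-constant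
midpoint approximation on `M` equal slices. If `F` and `G` are the corresponding
time-ordered evolutions, i.e. solutions of `F' = 𝓛_M F`, `G' = 𝓛 G` with
`F(t₀) = G(t₀) = 𝟙`, then `‖F(t₀+τ) - G(t₀+τ)‖_♦ ≤ (τ² L' / (2M)) e^{Lτ}`. -/
theorem piecewise_constant_evolution_error
    {A : Type*} [NormedRing A] [NormedAlgebra ℝ A] [CompleteSpace A]
    (𝓛 𝓛' LM F G : ℝ → A) (t₀ τ L L' : ℝ) (M : ℕ)
    (hτ : 0 < τ) (hM : 0 < M) (hL0 : 0 ≤ L) (hL'0 : 0 ≤ L')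
    (hderiv : ∀ t ∈ Set.Icc t₀ (t₀ + τ), HasDerivAt 𝓛 (𝓛' t) t)
    (hLbound : ∀ t ∈ Set.Icc t₀ (t₀ + τ), ‖𝓛 t‖ ≤ L)
    (hL'bound : ∀ t ∈ Set.Icc t₀ (t₀ + τ), ‖𝓛' t‖ ≤ L')
    (hLM : ∀ t, LM t = 𝓛 (t₀ + ((⌊(t - t₀) * M / τ⌋₊ : ℝ) + 1 / 2) * (τ / M)))
    (hF0 : F t₀ = 1) (hG0 : G t₀ = 1)
    (hF : ∀ t ∈ Set.Icc t₀ (t₀ + τ), HasDerivAt F (LM t * F t) t)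
    (hG : ∀ t ∈ Set.Icc t₀ (t₀ + τ), HasDerivAt G (𝓛 t * G t) t) :
    ‖F (t₀ + τ) - G (t₀ + τ)‖ ≤ τ ^ 2 * L' / (2 * M) * Real.exp (L * τ) := by
  have hMR : (0:ℝ) < M := by exact_mod_cast hM
  set c : ℝ := τ * L' / (2 * M) with hc
  have hc0 : 0 ≤ c := by positivity
  -- Lipschitz bound for 𝓛 on the interval
  have hLip : ∀ x ∈ Set.Icc t₀ (t₀ + τ), ∀ y ∈ Set.Icc t₀ (t₀ + τ),
      ‖𝓛 y - 𝓛 x‖ ≤ L' * ‖y - x‖ := fun x hx y hy =>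
    (convex_Icc t₀ (t₀ + τ)).norm_image_sub_le_of_norm_hasDerivWithin_le
      (fun s hs => (hderiv s hs).hasDerivWithinAt) hL'bound hx hy
  -- approximation bound on Ico
  have happrox : ∀ t ∈ Set.Ico t₀ (t₀ + τ), ‖LM t - 𝓛 t‖ ≤ c := by
    intro t ht
    obtain ⟨hmI, hmd⟩ := midpoint_slice_aux hτ hM ht
    rw [hLM t]
    calc ‖𝓛 (t₀ + ((⌊(t - t₀) * M / τ⌋₊ : ℝ) + 1 / 2) * (τ / M)) - 𝓛 t‖
        ≤ L' * ‖t₀ + ((⌊(t - t₀) * M / τ⌋₊ : ℝ) + 1 / 2) * (τ / M) - t‖ :=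
          hLip t (Set.Ico_subset_Icc_self ht) _ hmI
      _ ≤ L' * (τ / (2 * M)) := by
          apply mul_le_mul_of_nonneg_left _ hL'0
          rw [Real.norm_eq_abs]; exact hmd
      _ = c := by rw [hc]; ring
  have hLMbound : ∀ t ∈ Set.Ico t₀ (t₀ + τ), ‖LM t‖ ≤ L := by
    intro t ht
    rw [hLM t]
    exact hLbound _ (midpoint_slice_aux hτ hM ht).1
  -- right-multiplication operator
  set R : A →L[ℝ] A →L[ℝ] A := (ContinuousLinearMap.mul ℝ A).flip with hR
  have hRapp : ∀ x y : A, R x y = y * x := fun x y => rfl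
  have hRnorm : ∀ x : A, ‖R x‖ ≤ ‖x‖ := fun x =>
    ContinuousLinearMap.opNorm_le_bound _ (norm_nonneg x) fun y =>
      (norm_mul_le y x).trans (le_of_eq (mul_comm _ _))
  have hRmul : ∀ a b : A, R (a * b) = (R b).comp (R a) := by
    intro a b; ext y; simp [hRapp, mul_assoc]
  set u : ℝ → (A →L[ℝ] A) := fun s => R (F s) with huu
  have hu' : ∀ s ∈ Set.Icc t₀ (t₀ + τ), HasDerivAt u (R (LM s * F s)) s := fun s hs =>
    R.hasFDerivAt.comp_hasDerivAt s (hF s hs)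
  have hucont : ContinuousOn u (Set.Icc t₀ (t₀ + τ)) := fun s hs =>
    (hu' s hs).continuousAt.continuousWithinAt
  have hu0 : ‖u t₀‖ ≤ 1 := by
    have h : u t₀ = ContinuousLinearMap.id ℝ A := by
      ext y
      simp only [huu, hF0]
      rw [hRapp]
      simp
    rw [h]; exact ContinuousLinearMap.norm_id_le
  have hubound : ∀ s ∈ Set.Icc t₀ (t₀ + τ), ‖u s‖ ≤ Real.exp (L * (s - t₀)) := by
    intro s hs
    have h := norm_le_gronwallBound_of_norm_deriv_right_le hucont
      (fun x hx => (hu' x (Set.Ico_subset_Icc_self hx)).hasDerivWithinAt) hu0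
      (fun x hx => by
        rw [hRmul, add_zero]
        have h1 : ‖R (LM x)‖ ≤ L := (hRnorm _).trans (hLMbound x hx)
        calc ‖(R (F x)).comp (R (LM x))‖ ≤ ‖R (F x)‖ * ‖R (LM x)‖ :=
              ContinuousLinearMap.opNorm_comp_le _ _
          _ ≤ ‖R (F x)‖ * L := mul_le_mul_of_nonneg_left h1 (norm_nonneg _)
          _ = L * ‖u x‖ := mul_comm _ _) s hs
    rwa [gronwallBound_ε0, one_mul] at h
  -- the difference D
  set D : ℝ → A := fun s => F s - G s with hD
  have hD' : ∀ s ∈ Set.Icc t₀ (t₀ + τ), HasDerivAt D (LM s * F s - 𝓛 s * G s) s :=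
    fun s hs => (hF s hs).sub (hG s hs)
  have hDcont : ContinuousOn D (Set.Icc t₀ (t₀ + τ)) := fun s hs =>
    (hD' s hs).continuousAt.continuousWithinAt
  have hDbound : ∀ s ∈ Set.Ico t₀ (t₀ + τ),
      ‖LM s * F s - 𝓛 s * G s‖ ≤ L * ‖D s‖ + c * Real.exp (L * (s - t₀)) := by
    intro s hs
    have hsI := Set.Ico_subset_Icc_self hs
    have hsplit : LM s * F s - 𝓛 s * G s = 𝓛 s * (F s - G s) + (LM s - 𝓛 s) * F s := by
      noncomm_ring
    rw [hsplit]
    calc ‖𝓛 s * (F s - G s) + (LM s - 𝓛 s) * F s‖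
        ≤ ‖𝓛 s * (F s - G s)‖ + ‖(LM s - 𝓛 s) * F s‖ := norm_add_le _ _
      _ ≤ L * ‖D s‖ + c * Real.exp (L * (s - t₀)) := by
          gcongr ?_ + ?_
          · exact (norm_mul_le _ _).trans
              (mul_le_mul_of_nonneg_right (hLbound s hsI) (norm_nonneg _))
          · have heq : (LM s - 𝓛 s) * F s = u s (LM s - 𝓛 s) := (hRapp _ _).symm
            rw [heq]
            calc ‖u s (LM s - 𝓛 s)‖ ≤ ‖u s‖ * ‖LM s - 𝓛 s‖ :=
                  ContinuousLinearMap.le_opNorm _ _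
              _ ≤ Real.exp (L * (s - t₀)) * c :=
                  mul_le_mul (hubound s hsI) (happrox s hs) (norm_nonneg _)
                    (Real.exp_pos _).le
              _ = c * Real.exp (L * (s - t₀)) := mul_comm _ _
  -- fencing argument for every η > 0
  have key : ∀ η : ℝ, 0 < η →
      ‖D (t₀ + τ)‖ ≤ (c + η) * (τ * Real.exp (L * τ)) := by
    intro η hη
    have hBderiv : ∀ x : ℝ,
        HasDerivAt (fun s => (c + η) * ((s - t₀) * Real.exp (L * (s - t₀))))
          ((c + η) * (Real.exp (L * (x - t₀)) + (x - t₀) * (L * Real.exp (L * (x - t₀))))) x := by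
      intro x
      have h1 : HasDerivAt (fun s : ℝ => s - t₀) 1 x := (hasDerivAt_id x).sub_const t₀
      have h2 : HasDerivAt (fun s : ℝ => Real.exp (L * (s - t₀)))
          (L * Real.exp (L * (x - t₀))) x := by
        have h3 : HasDerivAt (fun s : ℝ => L * (s - t₀)) L x := by
          simpa using h1.const_mul L
        exact h3.exp.congr_deriv (mul_comm _ _)
      have h4 := (h1.mul h2).const_mul (c + η)
      exact h4.congr_deriv (by ring)
    have hfence := image_norm_le_of_norm_deriv_right_lt_deriv_boundary hDcont
      (fun x hx => (hD' x (Set.Ico_subset_Icc_self hx)).hasDerivWithinAt)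
      (B := fun s => (c + η) * ((s - t₀) * Real.exp (L * (s - t₀))))
      (B' := fun x => (c + η) * (Real.exp (L * (x - t₀)) + (x - t₀) * (L * Real.exp (L * (x - t₀)))))
      (by simp [hD, hF0, hG0]) hBderiv
      (fun x hx hEq => by
        have h1 := hDbound x hx
        have hEq' : ‖D x‖ = (c + η) * ((x - t₀) * Real.exp (L * (x - t₀))) := hEq
        have h2 : L * ‖D x‖ + c * Real.exp (L * (x - t₀)) <
            (c + η) * (Real.exp (L * (x - t₀)) + (x - t₀) * (L * Real.exp (L * (x - t₀)))) := by
          rw [hEq']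
          nlinarith [mul_pos hη (Real.exp_pos (L * (x - t₀)))]
        exact h1.trans_lt h2)
    have hend : t₀ + τ ∈ Set.Icc t₀ (t₀ + τ) := ⟨by linarith, le_refl _⟩
    have h5 := hfence hend
    have h6 : t₀ + τ - t₀ = τ := by ring
    rw [h6] at h5
    exact h5
  -- conclude
  apply le_of_forall_pos_le_add
  intro ε hε
  have hτe : 0 < τ * Real.exp (L * τ) := mul_pos hτ (Real.exp_pos _)
  have hη : 0 < ε / (τ * Real.exp (L * τ)) := div_pos hε hτe
  have h7 := key _ hη
  calc ‖F (t₀ + τ) - G (t₀ + τ)‖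
      ≤ (c + ε / (τ * Real.exp (L * τ))) * (τ * Real.exp (L * τ)) := h7
    _ = c * (τ * Real.exp (L * τ)) + ε := by
        rw [add_mul, div_mul_cancel₀ _ (ne_of_gt hτe)]
    _ = τ ^ 2 * L' / (2 * M) * Real.exp (L * τ) + ε := by
        rw [hc]; ring
end
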